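/- (Approximation theorem) Let R be a Dedekind domain (not a field) with fraction field K. Let 𝔭₁, …, 𝔭ₖ be distinct nonzero prime ideals of R, let x₁, …, xₖ ∈ K, and let n₁, …, nₖ be integers. Then there exists x ∈ K such that v_{𝔭ᵢ}(x − xᵢ) ≥ nᵢ for each i = 1, …, k, and v_𝔭(x) ≥ 0 for every nonzero prime ideal 𝔭 of R distinct from all the 𝔭ᵢ. -/

import Mathlib

open IsDedekindDomain IsDedekindDomain.HeightOneSpectrum


/-- Approximation theorem: given distinct nonzero primes 𝔭₁,…,𝔭ₖ of a Dedekind domain R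
(not a field) with fraction field K, elements x₁,…,xₖ ∈ K and integers n₁,…,nₖ, there is
an x ∈ K with v_{𝔭ᵢ}(x − xᵢ) ≥ nᵢ for each i, and v_𝔭(x) ≥ 0 for every other nonzero
prime 𝔭.  (Here the additive inequality v(y) ≥ n is expressed multiplicatively as
v(y) ≤ ofAdd (−n), and v(y) ≥ 0 as v(y) ≤ 1.) -/
theorem stmt13 (R : Type*) [CommRing R] [IsDomain R] [IsDedekindDomain R]
    (hnf : ¬IsField R)
    (K : Type*) [Field K] [Algebra R K] [IsFractionRing R K]
    (k : ℕ) (p : Fin k → IsDedekindDomain.HeightOneSpectrum R)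
    (hp : Function.Injective p) (x : Fin k → K) (n : Fin k → ℤ) :
    ∃ y : K,
      (∀ i : Fin k,
        (p i).valuation K (y - x i) ≤
          ((Multiplicative.ofAdd (-(n i)) : Multiplicative ℤ) : WithZero (Multiplicative ℤ))) ∧
      (∀ q : IsDedekindDomain.HeightOneSpectrum R, (∀ i : Fin k, q ≠ p i) →
        q.valuation K y ≤ 1) := by
  classical
  -- common denominator
  obtain ⟨b, hb⟩ := IsLocalization.exist_integer_multiples (nonZeroDivisors R) Finset.univ x
  have hb0 : (b : R) ≠ 0 := nonZeroDivisors.coe_ne_zero b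
  choose a ha using fun i => hb i (Finset.mem_univ i)
  -- ha : ∀ i, algebraMap R K (a i) = b • x i
  have hspan : (Ideal.span {(b : R)} : Ideal R) ≠ 0 := by
    simpa [Ideal.span_singleton_eq_bot] using hb0
  -- the valuation exponent of b at a prime v
  set m : HeightOneSpectrum R → ℕ := fun v =>
    (Associates.mk v.asIdeal).count (Associates.mk (Ideal.span {(b : R)})).factors with hm
  have hbval : ∀ v : HeightOneSpectrum R,
      v.intValuation (b : R) = Multiplicative.ofAdd (-(m v : ℤ)) := by
    intro v
    rw [intValuation_apply, intValuationDef_if_neg _ hb0]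
    rfl
  -- finite set of relevant primes
  set S : Finset (HeightOneSpectrum R) :=
    (Ideal.finite_factors hspan).toFinset ∪ Finset.image p Finset.univ with hS
  -- exponents and targets
  set e : HeightOneSpectrum R → ℕ := fun v =>
    if h : ∃ i, v = p i then (n h.choose).toNat + m v else m v with he
  set t : HeightOneSpectrum R → R := fun v =>
    if h : ∃ i, v = p i then a h.choose else 0 with ht
  obtain ⟨y₀, hy₀⟩ := IsDedekindDomain.exists_forall_sub_mem_ideal
    (s := S) (fun v => v.asIdeal) e
    (fun v _ => v.asIdeal.prime_of_isPrime v.ne_bot v.isPrime)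
    (fun v _ w _ hvw => fun hh => hvw (HeightOneSpectrum.ext hh))
    (fun v => t v)
  refine ⟨algebraMap R K y₀ / algebraMap R K (b : R), ?_, ?_⟩
  · intro i
    have hpi : p i ∈ S := by
      simp [hS]
    have hti : t (p i) = a i := by
      simp only [ht]
      have h : ∃ j, p i = p j := ⟨i, rfl⟩
      rw [dif_pos h]
      congr 1
      exact (hp h.choose_spec).symm
    have hei : e (p i) = (n i).toNat + m (p i) := by
      simp only [he]
      have h : ∃ j, p i = p j := ⟨i, rfl⟩
      rw [dif_pos h]
      congr 2
      exact congrArg n (hp h.choose_spec).symm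
    have hmem := hy₀ (p i) hpi
    rw [hti, hei] at hmem
    have hval : (p i).intValuation (y₀ - a i)
        ≤ Multiplicative.ofAdd (-(((n i).toNat + m (p i) : ℕ) : ℤ)) := by
      rw [intValuation_apply]
      exact (intValuation_le_pow_iff_dvd _ _ _).mpr
        (Ideal.dvd_span_singleton.mpr hmem)
    -- rewrite y - x i
    have hxi : x i = algebraMap R K (a i) / algebraMap R K (b : R) := by
      rw [ha i, Algebra.smul_def]
      field_simp [(IsFractionRing.to_map_eq_zero_iff (K := K)).not.mpr hb0]
    have hsub : algebraMap R K y₀ / algebraMap R K (b : R) - x i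
        = algebraMap R K (y₀ - a i) / algebraMap R K (b : R) := by
      rw [hxi, map_sub, sub_div]
    rw [hsub, map_div₀, valuation_of_algebraMap, valuation_of_algebraMap, hbval,
      div_le_iff₀ (WithZero.zero_lt_coe _)]
    calc (p i).intValuation (y₀ - a i)
        ≤ Multiplicative.ofAdd (-(((n i).toNat + m (p i) : ℕ) : ℤ)) := hval
      _ ≤ (Multiplicative.ofAdd (-(n i)) : Multiplicative ℤ)
          * (Multiplicative.ofAdd (-(m (p i) : ℤ)) : Multiplicative ℤ) := by
          rw [← WithZero.coe_mul, WithZero.coe_le_coe, ← ofAdd_add, Multiplicative.ofAdd_le]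
          push_cast
          have := Int.self_le_toNat (n i)
          omega
  · intro q hq
    have hqt : ¬ ∃ i, q = p i := by rintro ⟨i, rfl⟩; exact hq i rfl
    rw [map_div₀, valuation_of_algebraMap, valuation_of_algebraMap,
      div_le_one₀ (by rw [hbval]; exact WithZero.zero_lt_coe _), hbval]
    by_cases hqS : q ∈ S
    · have hmem := hy₀ q hqS
      simp only [ht, he, dif_neg hqt, sub_zero] at hmem
      rw [intValuation_apply]
      exact (intValuation_le_pow_iff_dvd _ _ _).mpr (Ideal.dvd_span_singleton.mpr hmem)
    · -- q does not divide b, so m q = 0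
      have hdvd : ¬ q.asIdeal ∣ Ideal.span {(b : R)} := by
        intro hd
        exact hqS (Finset.mem_union_left _ ((Ideal.finite_factors hspan).mem_toFinset.mpr hd))
      have hm0 : m q = 0 := by
        by_contra h
        exact hdvd ((Associates.count_ne_zero_iff_dvd hspan q.irreducible).mp h)
      rw [hm0]
      simpa using q.intValuation_le_one y₀
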